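/- Let X be a nonempty finite type, let D_0, D_1 be distributions on X, let 𝓕 be a family of functions X → [0,1], let ε ∈ (0,1) and γ ∈ (0, ε/2). Set D_X := (1−ε)·D_0 + ε·D_1 and let g be the associated tilted posterior function. Suppose h : X → [0,1] is (𝓕, ε²)-regular and γ-calibrated for g under D_X. Set p := E_{D_X}[h]. Then p > 0, and defining the distribution D̃_1(z) := h(z)·D_X(z)/p, for every f ∈ 𝓕 one has |E_{D_1}[f] − E_{D̃_1}[f]| ≤ ε + 2γ/ε². -/

import Mathlib

/-- Expectation of `f` under the (finitely supported) distribution `D`. -/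
noncomputable def expect {X : Type*} [Fintype X] (D f : X → ℝ) : ℝ := ∑ x, D x * f x

/-- `D` is a probability distribution on the finite type `X`. -/
def IsDist {X : Type*} [Fintype X] (D : X → ℝ) : Prop := (∀ x, 0 ≤ D x) ∧ ∑ x, D x = 1

theorem stmt_2 {X : Type*} [Fintype X] [Nonempty X]
    (D0 D1 : X → ℝ) (hD0 : IsDist D0) (hD1 : IsDist D1)
    (𝓕 : Set (X → ℝ)) (h𝓕 : ∀ f ∈ 𝓕, ∀ x, f x ∈ Set.Icc (0:ℝ) 1)
    (ε γ : ℝ) (hε : ε ∈ Set.Ioo (0:ℝ) 1) (hγ : γ ∈ Set.Ioo (0:ℝ) (ε/2))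
    (DX : X → ℝ) (hDX : DX = fun x => (1 - ε) * D0 x + ε * D1 x)
    (g : X → ℝ)
    (hg : g = fun x => if 0 < DX x then ε * D1 x / DX x else 0)
    (h : X → ℝ) (hh : ∀ x, h x ∈ Set.Icc (0:ℝ) 1)
    (hreg : ∀ f ∈ 𝓕, |expect DX (fun x => f x * (g x - h x))| ≤ ε ^ 2)
    (hcal : ∀ w : ℝ → ℝ, (∀ t, w t ∈ Set.Icc (0:ℝ) 1) →
      |expect DX (fun x => w (h x) * (g x - h x))| ≤ γ)
    (p : ℝ) (hp : p = expect DX h) :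
    0 < p ∧
    ∀ f ∈ 𝓕,
      |expect D1 f - expect (fun z => h z * DX z / p) f| ≤ ε + 2 * γ / ε ^ 2 := by
  obtain ⟨hε0, hε1⟩ := hε
  obtain ⟨hγ0, hγε⟩ := hγ
  have hDXnn : ∀ x, 0 ≤ DX x := by
    intro x; rw [hDX]; have := hD0.1 x; have := hD1.1 x; dsimp only; nlinarith
  have key : ∀ x, DX x * g x = ε * D1 x := by
    intro x
    rw [hg]
    by_cases hx : 0 < DX x
    · simp only [hx, if_true]
      field_simp
    · have hx0 : DX x = 0 := le_antisymm (not_lt.mp hx) (hDXnn x)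
      have hd1 : D1 x = 0 := by
        have h0 := hD0.1 x; have h1 := hD1.1 x
        rw [hDX] at hx0; dsimp only at hx0; nlinarith
      simp [hx, hx0, hd1]
  have Eg : expect DX g = ε := by
    unfold expect
    rw [Finset.sum_congr rfl (fun x _ => key x), ← Finset.mul_sum, hD1.2, mul_one]
  have hpe : |ε - p| ≤ γ := by
    have hc := hcal (fun _ => 1) (fun t => by norm_num)
    have heq : expect DX (fun x => (1:ℝ) * (g x - h x)) = ε - p := by
      rw [hp]
      unfold expect
      rw [← Eg]
      unfold expect
      rw [← Finset.sum_sub_distrib]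
      exact Finset.sum_congr rfl (fun x _ => by ring)
    rwa [heq] at hc
  have hppos : 0 < p := by
    have h1 := (abs_le.mp hpe).2
    linarith
  refine ⟨hppos, ?_⟩
  intro f hf
  set A := expect DX (fun x => f x * g x) with hA
  set B := expect DX (fun x => f x * h x) with hB
  have hED1 : expect D1 f = A / ε := by
    rw [eq_div_iff (ne_of_gt hε0), hA]
    unfold expect
    rw [Finset.sum_mul]
    exact Finset.sum_congr rfl (fun x _ => by linear_combination (-(f x)) * key x)
  have hEDt : expect (fun z => h z * DX z / p) f = B / p := by
    rw [hB]
    unfold expect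
    rw [Finset.sum_div]
    refine Finset.sum_congr rfl (fun x _ => ?_)
    field_simp
  have hABbound : |A - B| ≤ ε ^ 2 := by
    have hr := hreg f hf
    have heq : expect DX (fun x => f x * (g x - h x)) = A - B := by
      rw [hA, hB]; unfold expect
      rw [← Finset.sum_sub_distrib]
      exact Finset.sum_congr rfl (fun x _ => by ring)
    rwa [heq] at hr
  have hBnn : 0 ≤ B := by
    rw [hB]; unfold expect
    exact Finset.sum_nonneg fun x _ =>
      mul_nonneg (hDXnn x) (mul_nonneg (h𝓕 f hf x).1 (hh x).1)
  have hBp : B ≤ p := by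
    rw [hB, hp]; unfold expect
    refine Finset.sum_le_sum fun x _ => ?_
    have hfx := h𝓕 f hf x; have hhx := hh x; have := hDXnn x
    dsimp only
    exact mul_le_mul_of_nonneg_left (mul_le_of_le_one_left hhx.1 hfx.2) this
  rw [hED1, hEDt]
  have heq2 : A / ε - B / p = (A - B) / ε + B * (p - ε) / (ε * p) := by
    field_simp
    ring
  rw [heq2]
  have h1 : |(A - B) / ε| ≤ ε := by
    rw [abs_div, abs_of_pos hε0, div_le_iff₀ hε0]
    calc |A - B| ≤ ε ^ 2 := hABbound
      _ = ε * ε := sq ε ▸ rfl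
  have h2 : |B * (p - ε) / (ε * p)| ≤ γ / ε := by
    rw [abs_div, abs_mul, abs_of_nonneg hBnn, abs_of_pos (mul_pos hε0 hppos),
      div_le_div_iff₀ (mul_pos hε0 hppos) hε0]
    have hpe' : |p - ε| ≤ γ := by rwa [abs_sub_comm]
    have habs : 0 ≤ |p - ε| := abs_nonneg _
    nlinarith [mul_le_mul hBp hpe' habs hppos.le, hε0]
  have h3 : γ / ε ≤ 2 * γ / ε ^ 2 := by
    rw [div_le_div_iff₀ hε0 (by positivity)]
    nlinarith [mul_pos hγ0 hε0, mul_pos (mul_pos hγ0 hε0) (sub_pos.mpr hε1)]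
  calc |(A - B) / ε + B * (p - ε) / (ε * p)|
      ≤ |(A - B) / ε| + |B * (p - ε) / (ε * p)| := abs_add_le _ _
    _ ≤ ε + γ / ε := add_le_add h1 h2
    _ ≤ ε + 2 * γ / ε ^ 2 := by linarith
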